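/- The function M(x,y) = 20 f₁(x,y)⁴ / f₂(x,y)⁵ is an integrating factor of the unperturbed Żołądek cubic system: for every real a and every point (x,y) with f₁(x,y) ≠ 0 and f₂(x,y) ≠ 0, the divergence of the rescaled vector field (M·P, M·Q) vanishes, i.e. ∂(M·P)/∂x + ∂(M·Q)/∂y = 0 at (x,y). -/

import Mathlib

noncomputable section

/-- The `x`-component of the unperturbed Żołądek cubic vector field. -/
def P₀ (a x y : ℝ) : ℝ := a + 5/2 * x + x * y + x^3

/-- The `y`-component of the unperturbed Żołądek cubic vector field. -/
def Q₀ (a x y : ℝ) : ℝ := -2*a*x + 2*y - 3*x^2 + 4*y^2 - a*x^3 + 6*x^2*y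

/-- The invariant algebraic curve `f₁`. -/
def f₁ (x y : ℝ) : ℝ := x^4 + 4*x^2 + 4*y

/-- The invariant algebraic curve `f₂`. -/
def f₂ (a x y : ℝ) : ℝ := x^5 + 5*x^3 + 5*x*y + 5/2 * x + a

/-- The integrating factor `M = 20 f₁⁴ / f₂⁵`. -/
def M₀ (a x y : ℝ) : ℝ := 20 * (f₁ x y)^4 / (f₂ a x y)^5

/-- `M = 20 f₁⁴/f₂⁵` is an integrating factor of the unperturbed Żołądek cubic system:
at every point where `f₁ ≠ 0` and `f₂ ≠ 0`, the divergence of the rescaled vector field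
`(M·P, M·Q)` vanishes, i.e. `∂(M·P)/∂x + ∂(M·Q)/∂y = 0`. -/
theorem M_integrating_factor (a x y : ℝ) (h₁ : f₁ x y ≠ 0) (h₂ : f₂ a x y ≠ 0) :
    deriv (fun x' => M₀ a x' y * P₀ a x' y) x
      + deriv (fun y' => M₀ a x y' * Q₀ a x y') y = 0 := by
  -- derivatives in x
  have hf1x : HasDerivAt (fun t : ℝ => f₁ t y) (4*x^3 + 8*x) x := by
    have h := ((hasDerivAt_pow 4 x).add
      (HasDerivAt.const_mul 4 (hasDerivAt_pow 2 x))).add_const (4*y)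
    convert h using 1 <;> (try funext t) <;> (try simp only [f₁, id_eq, Pi.add_apply]) <;> (try push_cast) <;> (try rfl) <;> ring
  have hPx : HasDerivAt (fun t : ℝ => P₀ a t y) (5/2 + y + 3*x^2) x := by
    have h := (((hasDerivAt_const x a).add
        (HasDerivAt.const_mul (5/2 : ℝ) (hasDerivAt_id x))).add
        ((hasDerivAt_id x).mul_const y)).add (hasDerivAt_pow 3 x)
    convert h using 1 <;> (try funext t) <;> (try simp only [P₀, id_eq, Pi.add_apply]) <;> (try push_cast) <;> (try rfl) <;> ring
  have hf2x : HasDerivAt (fun t : ℝ => f₂ a t y) (5*x^4 + 15*x^2 + 5*y + 5/2) x := by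
    have h := ((((hasDerivAt_pow 5 x).add
        (HasDerivAt.const_mul 5 (hasDerivAt_pow 3 x))).add
        (HasDerivAt.const_mul 5 ((hasDerivAt_id x).mul_const y))).add
        (HasDerivAt.const_mul (5/2 : ℝ) (hasDerivAt_id x))).add_const a
    convert h using 1 <;> (try funext t) <;> (try simp only [f₂, id_eq, Pi.add_apply]) <;> (try push_cast) <;> (try rfl) <;> ring
  -- derivatives in y
  have hf1y : HasDerivAt (fun t : ℝ => f₁ x t) 4 y := by
    have h := (hasDerivAt_const y (x^4 + 4*x^2)).add
      (HasDerivAt.const_mul 4 (hasDerivAt_id y))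
    convert h using 1 <;> (try funext t) <;> (try simp only [f₁, id_eq, Pi.add_apply]) <;> (try push_cast) <;> (try rfl) <;> ring
  have hf2y : HasDerivAt (fun t : ℝ => f₂ a x t) (5*x) y := by
    have h := ((hasDerivAt_const y (x^5 + 5*x^3)).add
      (HasDerivAt.const_mul (5*x) (hasDerivAt_id y))).add_const (5/2*x + a)
    convert h using 1 <;> (try funext t) <;> (try simp only [f₂, id_eq, Pi.add_apply]) <;> (try push_cast) <;> (try rfl) <;> ring
  have hQy : HasDerivAt (fun t : ℝ => Q₀ a x t) (2 + 8*y + 6*x^2) y := by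
    have h := ((((hasDerivAt_const y (-2*a*x)).add
        (HasDerivAt.const_mul 2 (hasDerivAt_id y))).sub
        (hasDerivAt_const y (3*x^2))).add
        (HasDerivAt.const_mul 4 (hasDerivAt_pow 2 y))).add
        (((hasDerivAt_const y (-(a*x^3)))).add
          (HasDerivAt.const_mul (6*x^2) (hasDerivAt_id y)))
    convert h using 1 <;> (try funext t) <;> (try simp only [Q₀, id_eq, Pi.add_apply, Pi.sub_apply]) <;> (try push_cast) <;> (try rfl) <;> ring
  -- numerators and denominators
  have hden : (f₂ a x y)^5 ≠ 0 := pow_ne_zero _ h₂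
  have hNumX : HasDerivAt (fun t : ℝ => 20 * (f₁ t y)^4 * P₀ a t y)
      (20 * ((4 * (f₁ x y)^3 * (4*x^3 + 8*x)) * P₀ a x y
        + (f₁ x y)^4 * (5/2 + y + 3*x^2))) x := by
    have h := HasDerivAt.const_mul (20 : ℝ) ((hf1x.pow 4).mul hPx)
    convert h using 1 <;> (try funext t) <;> (try simp only [Pi.mul_apply, Pi.pow_apply]) <;> (try push_cast) <;> (try rfl) <;> ring
  have hDenX : HasDerivAt (fun t : ℝ => (f₂ a t y)^5)
      (5 * (f₂ a x y)^4 * (5*x^4 + 15*x^2 + 5*y + 5/2)) x := by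
    have h := hf2x.pow 5
    convert h using 1 <;> (try funext t) <;> (try push_cast) <;> (try rfl) <;> ring
  have hNumY : HasDerivAt (fun t : ℝ => 20 * (f₁ x t)^4 * Q₀ a x t)
      (20 * ((4 * (f₁ x y)^3 * 4) * Q₀ a x y
        + (f₁ x y)^4 * (2 + 8*y + 6*x^2))) y := by
    have h := HasDerivAt.const_mul (20 : ℝ) ((hf1y.pow 4).mul hQy)
    convert h using 1 <;> (try funext t) <;> (try simp only [Pi.mul_apply, Pi.pow_apply]) <;> (try push_cast) <;> (try rfl) <;> ring
  have hDenY : HasDerivAt (fun t : ℝ => (f₂ a x t)^5)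
      (5 * (f₂ a x y)^4 * (5*x)) y := by
    have h := hf2y.pow 5
    convert h using 1 <;> (try funext t) <;> (try push_cast) <;> (try rfl) <;> ring
  have hX : HasDerivAt (fun t : ℝ => M₀ a t y * P₀ a t y)
      ((20 * ((4 * (f₁ x y)^3 * (4*x^3 + 8*x)) * P₀ a x y
        + (f₁ x y)^4 * (5/2 + y + 3*x^2)) * (f₂ a x y)^5
        - 20 * (f₁ x y)^4 * P₀ a x y * (5 * (f₂ a x y)^4 * (5*x^4 + 15*x^2 + 5*y + 5/2)))
        / ((f₂ a x y)^5)^2) x := by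
    have h := hNumX.div hDenX hden
    have heq : (fun t : ℝ => M₀ a t y * P₀ a t y)
        = fun t : ℝ => 20 * (f₁ t y)^4 * P₀ a t y / (f₂ a t y)^5 := by
      funext t; simp only [M₀]; ring
    rw [heq]
    exact h
  have hY : HasDerivAt (fun t : ℝ => M₀ a x t * Q₀ a x t)
      ((20 * ((4 * (f₁ x y)^3 * 4) * Q₀ a x y
        + (f₁ x y)^4 * (2 + 8*y + 6*x^2)) * (f₂ a x y)^5
        - 20 * (f₁ x y)^4 * Q₀ a x y * (5 * (f₂ a x y)^4 * (5*x)))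
        / ((f₂ a x y)^5)^2) y := by
    have h := hNumY.div hDenY hden
    have heq : (fun t : ℝ => M₀ a x t * Q₀ a x t)
        = fun t : ℝ => 20 * (f₁ x t)^4 * Q₀ a x t / (f₂ a x t)^5 := by
      funext t; simp only [M₀]; ring
    rw [heq]
    exact h
  rw [hX.deriv, hY.deriv]
  rw [← add_div, div_eq_zero_iff]
  left
  simp only [P₀, Q₀, f₁, f₂]
  ring
end
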